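/- arXiv:1412.4904 — 2 statements merged into one kernel-verified Lean document; each statement's English description precedes it below -/
import Mathlib

section
/- The private-coin randomized garden-hose complexity of Equality on n-bit inputs satisfies RGH^{pri}(EQ_n) = Ω(√n / log n). -/
/-- One step of the water's path in a garden-hose game: on even steps Alice's
matching (an involution on pipes together with the tap `none`) is applied,
on odd steps Bob's matching (an involution on the pipes). A fixed point of the
relevant involution means the corresponding pipe end is open (unmatched). -/
def ghStep {s : ℕ} (A : Option (Fin s) → Option (Fin s)) (B : Fin s → Fin s)
    (n : ℕ) (v : Option (Fin s)) : Option (Fin s) :=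
  if n % 2 = 0 then A v else Option.map B v

/-- Position of the water after `n` steps, starting at the tap `none`. -/
def ghWalk {s : ℕ} (A : Option (Fin s) → Option (Fin s)) (B : Fin s → Fin s) :
    ℕ → Option (Fin s)
  | 0 => none
  | n + 1 => ghStep A B n (ghWalk A B n)

/-- The length of the path starting at the tap: the first time the walk halts
(i.e. the current pipe end is open). Its parity is the output of the game. -/
noncomputable def ghLen {s : ℕ} (A : Option (Fin s) → Option (Fin s))
    (B : Fin s → Fin s) : ℕ :=
  sInf {n | ghStep A B n (ghWalk A B n) = ghWalk A B n}

/-- A garden-hose protocol with `s` pipes: Alice places, depending on her input,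
a matching (involution) on the pipes together with the tap `none`; Bob places a
matching on the pipes. -/
structure GHProtocol (X Y : Type) (s : ℕ) where
  A : X → Option (Fin s) → Option (Fin s)
  B : Y → Fin s → Fin s
  hA : ∀ x, Function.Involutive (A x)
  hB : ∀ y, Function.Involutive (B y)

/-- The protocol computes `f` if for every input the walk from the tap halts and
the parity of the path length is `f x y`. -/
def GHProtocol.Computes {X Y : Type} {s : ℕ} (P : GHProtocol X Y s)
    (f : X → Y → Bool) : Prop :=
  ∀ x y,
    {n | ghStep (P.A x) (P.B y) n (ghWalk (P.A x) (P.B y) n)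
        = ghWalk (P.A x) (P.B y) n}.Nonempty ∧
    (ghLen (P.A x) (P.B y) % 2 = 1 ↔ f x y = true)

/-- The garden-hose complexity of `f`. -/
noncomputable def GH {X Y : Type} (f : X → Y → Bool) : ℕ :=
  sInf {s | ∃ P : GHProtocol X Y s, P.Computes f}

/-- A private-coin randomized garden-hose protocol with `s` pipes: Alice's
matching depends on `(x, r_A)` and Bob's on `(y, r_B)` for private random
strings `r_A`, `r_B` drawn uniformly from `Fin mA` and `Fin mB`. -/
structure RGHProtocol (X Y : Type) (s mA mB : ℕ) where
  A : X → Fin mA → Option (Fin s) → Option (Fin s)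
  B : Y → Fin mB → Fin s → Fin s
  hA : ∀ x r, Function.Involutive (A x r)
  hB : ∀ y r, Function.Involutive (B y r)

open Classical in
/-- The protocol computes `f` with error at most `1/3`: for every input, with
probability at least `2/3` over the private coins, the walk from the tap halts
and the parity of the path length equals `f x y`. -/
noncomputable def RGHProtocol.Computes {X Y : Type} {s mA mB : ℕ}
    (P : RGHProtocol X Y s mA mB) (f : X → Y → Bool) : Prop :=
  ∀ x y,
    2 * (mA * mB) ≤
      3 * ((Finset.univ : Finset (Fin mA × Fin mB)).filter (fun r =>
        {n | ghStep (P.A x r.1) (P.B y r.2) n (ghWalk (P.A x r.1) (P.B y r.2) n)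
            = ghWalk (P.A x r.1) (P.B y r.2) n}.Nonempty ∧
        (ghLen (P.A x r.1) (P.B y r.2) % 2 = 1 ↔ f x y = true))).card

/-- The Equality function on `n`-bit inputs. -/
def EQ (n : ℕ) (x y : Fin n → Bool) : Bool := decide (x = y)


section Aux
open Finset

lemma sum_prod_pow {α : Type*} [Fintype α] (t : ℕ) (h : α → ℝ) :
    ∑ ω : Fin t → α, ∏ i, h (ω i) = (∑ a, h a) ^ t := by
  induction t with
  | zero => simp
  | succ t ih =>
    have e : ∑ ω : Fin (t+1) → α, ∏ i, h (ω i)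
        = ∑ p : α × (Fin t → α), (h p.1 * ∏ i, h (p.2 i)) := by
      refine (Fintype.sum_equiv (Fin.consEquiv fun _ : Fin (t+1) => α) _ _ (fun p => ?_)).symm
      rw [Fin.prod_univ_succ]
      simp [Fin.consEquiv]
    rw [e, Fintype.sum_prod_type, pow_succ, ← ih, mul_comm]
    simp [Finset.mul_sum, Finset.sum_mul]
    exact Finset.sum_comm

lemma exp_quad {x : ℝ} (h0 : 0 ≤ x) (h1 : x ≤ 1/2) : Real.exp x ≤ 1 + x + 2*x^2 := by
  have h2 : (1 - x) * Real.exp x ≤ 1 := by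
    have := Real.add_one_le_exp (-x)
    have hx : Real.exp (-x) * Real.exp x = 1 := by
      rw [← Real.exp_add]; simp
    nlinarith [Real.exp_pos x]
  nlinarith [Real.exp_pos x]

lemma chernoff {α : Type*} [Fintype α] [Nonempty α] (g : α → ℝ)
    (hg0 : ∀ a, 0 ≤ g a) (hg1 : ∀ a, g a ≤ 1) (t : ℕ) :
    ((Finset.univ.filter (fun ω : Fin t → α =>
        (t : ℝ) * ((∑ a, g a) / Fintype.card α) + t / 12 ≤ ∑ i, g (ω i))).card : ℝ)
      ≤ Real.exp (-(t : ℝ) / 1152) * (Fintype.card α : ℝ) ^ t := by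
  classical
  set N : ℝ := (Fintype.card α : ℝ) with hNdef
  have hN : 0 < N := by
    rw [hNdef]
    exact_mod_cast Fintype.card_pos (α := α)
  set μ : ℝ := (∑ a, g a) / N with hμdef
  have hμ0 : 0 ≤ μ := by
    apply div_nonneg _ hN.le
    exact Finset.sum_nonneg fun a _ => hg0 a
  have hμ1 : μ ≤ 1 := by
    rw [hμdef, div_le_one hN]
    calc ∑ a, g a ≤ ∑ a : α, (1:ℝ) := Finset.sum_le_sum fun a _ => hg1 a
    _ = N := by simp [hNdef]
  set F := Finset.univ.filter (fun ω : Fin t → α =>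
        (t : ℝ) * μ + t / 12 ≤ ∑ i, g (ω i)) with hF
  have step2 : (F.card : ℝ) * Real.exp ((1/48) * ((t:ℝ)*μ + t/12))
      ≤ ∑ ω ∈ F, Real.exp ((1/48) * ∑ i, g (ω i)) := by
    rw [← nsmul_eq_mul]
    apply Finset.card_nsmul_le_sum
    intro ω hω
    apply Real.exp_le_exp.2
    have := (Finset.mem_filter.1 hω).2
    nlinarith
  have step3 : ∑ ω ∈ F, Real.exp ((1/48) * ∑ i, g (ω i))
      ≤ ∑ ω : Fin t → α, Real.exp ((1/48) * ∑ i, g (ω i)) := by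
    apply Finset.sum_le_sum_of_subset_of_nonneg (Finset.filter_subset _ _)
    intros; positivity
  have step4 : ∑ ω : Fin t → α, Real.exp ((1/48) * ∑ i, g (ω i))
      = (∑ a, Real.exp ((1/48) * g a)) ^ t := by
    rw [← sum_prod_pow]
    apply Finset.sum_congr rfl
    intro ω _
    rw [Finset.mul_sum, Real.exp_sum]
  have step5 : ∑ a, Real.exp ((1/48) * g a) ≤ N * Real.exp (μ/48 + 1/1152) := by
    calc ∑ a, Real.exp ((1/48) * g a)
        ≤ ∑ a, (1 + (1/48) * g a + 1/1152) := by
          apply Finset.sum_le_sum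
          intro a _
          have h := exp_quad (x := (1/48) * g a) (mul_nonneg (by norm_num) (hg0 a)) (by nlinarith [hg1 a, hg0 a])
          nlinarith [hg0 a, hg1 a]
      _ = N * (1 + μ/48 + 1/1152) := by
          rw [Finset.sum_add_distrib, Finset.sum_add_distrib, ← Finset.mul_sum]
          have : (∑ a, g a) = N * μ := by
            rw [hμdef]; field_simp
          simp [this, hNdef]
          ring
      _ ≤ N * Real.exp (μ/48 + 1/1152) := by
          apply mul_le_mul_of_nonneg_left _ hN.le
          have := Real.add_one_le_exp (μ/48 + 1/1152)
          linarith
  have step6 : (∑ a, Real.exp ((1/48) * g a)) ^ t ≤ (N * Real.exp (μ/48 + 1/1152)) ^ t := by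
    apply pow_le_pow_left₀ _ step5
    positivity
  have expand : (N * Real.exp (μ/48 + 1/1152)) ^ t
      = N ^ t * (Real.exp (-(t:ℝ)/1152) * Real.exp ((1/48) * ((t:ℝ)*μ + t/12))) := by
    rw [mul_pow, ← Real.exp_nat_mul, ← Real.exp_add]
    congr 1
    ring
  have hE : 0 < Real.exp ((1/48) * ((t:ℝ)*μ + t/12)) := Real.exp_pos _
  have final : (F.card : ℝ) * Real.exp ((1/48) * ((t:ℝ)*μ + t/12))
      ≤ (Real.exp (-(t:ℝ)/1152) * N ^ t) * Real.exp ((1/48) * ((t:ℝ)*μ + t/12)) := by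
    calc (F.card : ℝ) * Real.exp ((1/48) * ((t:ℝ)*μ + t/12))
        ≤ (N * Real.exp (μ/48 + 1/1152)) ^ t := le_trans step2 (le_trans step3 (step4 ▸ step6))
      _ = (Real.exp (-(t:ℝ)/1152) * N ^ t) * Real.exp ((1/48) * ((t:ℝ)*μ + t/12)) := by
          rw [expand]; ring
  exact le_of_mul_le_mul_right final hE

lemma exists_good_sample {α β : Type*} [Fintype α] [Nonempty α] [Fintype β]
    (p : β → α → Prop) [∀ b, DecidablePred (p b)] (t : ℕ)
    (ht : (Fintype.card β : ℝ) * Real.exp (-(t:ℝ)/1152) < 1) :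
    ∃ ω : Fin t → α, ∀ b : β,
      12 * t * (Finset.univ.filter (fun r => p b r)).card
        ≤ 12 * Fintype.card α * (Finset.univ.filter (fun i => p b (ω i))).card
            + Fintype.card α * t := by
  classical
  set N := Fintype.card α with hNdef
  have hN : 0 < N := Fintype.card_pos
  set good : (Fin t → α) → Prop := fun ω => ∀ b : β,
      12 * t * (Finset.univ.filter (fun r => p b r)).card
        ≤ 12 * N * (Finset.univ.filter (fun i => p b (ω i))).card + N * t with hgood
  have claim1 : ∀ b : β, ((Finset.univ.filter (fun ω : Fin t → α =>
        ¬ (12 * t * (Finset.univ.filter (fun r => p b r)).card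
        ≤ 12 * N * (Finset.univ.filter (fun i => p b (ω i))).card + N * t))).card : ℝ)
      ≤ Real.exp (-(t:ℝ)/1152) * (N : ℝ) ^ t := by
    intro b
    set g : α → ℝ := fun a => 1 - (if p b a then 1 else 0) with hg
    have hg0 : ∀ a, 0 ≤ g a := by intro a; simp [hg]; split <;> norm_num
    have hg1 : ∀ a, g a ≤ 1 := by intro a; simp [hg]; split <;> norm_num
    have hsum : ∑ a, g a = (N : ℝ) - (Finset.univ.filter (fun r => p b r)).card := by
      rw [hg, Finset.sum_sub_distrib, Finset.sum_boole]
      simp [hNdef]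
    have hC := chernoff g hg0 hg1 t
    refine le_trans ?_ hC
    apply Nat.cast_le.2
    apply Finset.card_le_card
    intro ω hω
    rw [Finset.mem_filter] at hω ⊢
    refine ⟨Finset.mem_univ _, ?_⟩
    set c := (Finset.univ.filter (fun r => p b r)).card with hc
    set d := (Finset.univ.filter (fun i => p b (ω i))).card with hd
    have hbad : 12 * N * d + N * t < 12 * t * c := Nat.lt_of_not_le hω.2
    have hsum2 : ∑ i, g (ω i) = (t : ℝ) - d := by
      rw [hg]
      rw [Finset.sum_sub_distrib, Finset.sum_boole]
      simp [hd]
    have hNr : (0:ℝ) < N := by exact_mod_cast hN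
    rw [hsum, hsum2, ← hNdef]
    have hbadr : (12 * N * d + N * t : ℝ) + 1 ≤ 12 * t * c := by exact_mod_cast hbad
    have hdiv : ((N:ℝ) - c)/N * N = (N:ℝ) - c := div_mul_cancel₀ _ hNr.ne'
    have key : ((t:ℝ) * (((N:ℝ) - c)/N) + t/12) * N ≤ ((t:ℝ) - d) * N := by nlinarith
    exact le_of_mul_le_mul_right key hNr
  -- union bound
  have hsub : Finset.univ.filter (fun ω => ¬ good ω)
      ⊆ Finset.univ.biUnion (fun b : β => Finset.univ.filter (fun ω : Fin t → α =>
        ¬ (12 * t * (Finset.univ.filter (fun r => p b r)).card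
        ≤ 12 * N * (Finset.univ.filter (fun i => p b (ω i))).card + N * t))) := by
    intro ω hω
    rw [Finset.mem_filter] at hω
    have h2 := hω.2
    rw [hgood] at h2
    simp only [not_forall, not_le] at h2
    obtain ⟨b, hb⟩ := h2
    apply Finset.mem_biUnion.2
    exact ⟨b, Finset.mem_univ _, Finset.mem_filter.2 ⟨Finset.mem_univ _, Nat.not_le.2 hb⟩⟩
  have hcardbad : ((Finset.univ.filter (fun ω => ¬ good ω)).card : ℝ)
      < (N : ℝ) ^ t := by
    calc ((Finset.univ.filter (fun ω => ¬ good ω)).card : ℝ)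
        ≤ ((Finset.univ.biUnion (fun b : β => Finset.univ.filter (fun ω : Fin t → α =>
            ¬ (12 * t * (Finset.univ.filter (fun r => p b r)).card
            ≤ 12 * N * (Finset.univ.filter (fun i => p b (ω i))).card + N * t)))).card : ℝ) := by
          exact_mod_cast Finset.card_le_card hsub
      _ ≤ ∑ b : β, ((Finset.univ.filter (fun ω : Fin t → α =>
            ¬ (12 * t * (Finset.univ.filter (fun r => p b r)).card
            ≤ 12 * N * (Finset.univ.filter (fun i => p b (ω i))).card + N * t))).card : ℝ) := by
          exact_mod_cast Finset.card_biUnion_le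
      _ ≤ ∑ _b : β, Real.exp (-(t:ℝ)/1152) * (N : ℝ) ^ t :=
          Finset.sum_le_sum fun b _ => claim1 b
      _ = (Fintype.card β : ℝ) * Real.exp (-(t:ℝ)/1152) * (N : ℝ) ^ t := by
          rw [Finset.sum_const]; simp; ring
      _ < 1 * (N : ℝ) ^ t := by
          apply mul_lt_mul_of_pos_right ht
          positivity
      _ = (N : ℝ) ^ t := by ring
  have hex : (Finset.univ.filter (fun ω => good ω)).Nonempty := by
    by_contra hemp
    rw [Finset.not_nonempty_iff_eq_empty] at hemp
    have := Finset.card_filter_add_card_filter_not (s := Finset.univ)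
      (p := fun ω : Fin t → α => good ω)
    rw [hemp] at this
    simp at this
    rw [← hNdef] at this
    have hr : ((Finset.univ.filter (fun ω : Fin t → α => ¬ good ω)).card : ℝ) = (N:ℝ)^t := by
      rw [this]; push_cast; ring
    rw [hr] at hcardbad
    exact lt_irrefl _ hcardbad
  obtain ⟨ω, hω⟩ := hex
  exact ⟨ω, (Finset.mem_filter.1 hω).2⟩

/-- `GoodGH v a b`: the walk halts and the parity matches `v`. -/
def GoodGH {s : ℕ} (v : Bool) (a : Option (Fin s) → Option (Fin s))
    (b : Fin s → Fin s) : Prop :=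
  {n | ghStep a b n (ghWalk a b n) = ghWalk a b n}.Nonempty ∧
    (ghLen a b % 2 = 1 ↔ v = true)

lemma goodGH_not_both {s : ℕ} {a : Option (Fin s) → Option (Fin s)}
    {b : Fin s → Fin s} (h1 : GoodGH true a b) (h2 : GoodGH false a b) : False := by
  have hp := h1.2.mpr rfl
  have := h2.2.mp hp
  simp at this

open Classical in
lemma computes_sum {n s mA mB : ℕ}
    (P : RGHProtocol (Fin n → Bool) (Fin n → Bool) s mA mB)
    (hP : P.Computes (EQ n)) (x y : Fin n → Bool) :
    2 * (mA * mB) ≤ 3 * ∑ r2 : Fin mB,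
      (Finset.univ.filter (fun r1 : Fin mA =>
        GoodGH (EQ n x y) (P.A x r1) (P.B y r2))).card := by
  refine le_trans (hP x y) (Nat.mul_le_mul_left 3 (le_of_eq ?_))
  rw [Finset.card_filter, Fintype.sum_prod_type_right]
  refine Finset.sum_congr rfl fun r2 _ => ?_
  rw [Finset.card_filter]
  refine Finset.sum_congr rfl fun r1 _ => ?_
  exact if_congr Iff.rfl rfl rfl


end Aux

/-- The private-coin randomized garden-hose complexity of Equality is
`Ω(√n / log n)`: any private-coin randomized garden-hose protocol for `EQ_n`
with `s` pipes satisfies `√n ≤ O((s + 1) · log n)`. -/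
theorem RGH_private_equality_lower_bound :
    ∃ c : ℕ, 0 < c ∧
      ∀ (n s mA mB : ℕ), 0 < mA → 0 < mB →
        ∀ P : RGHProtocol (Fin n → Bool) (Fin n → Bool) s mA mB,
          P.Computes (EQ n) →
          Nat.sqrt n ≤ c * (s + 1) * Nat.log 2 (n + 2) := by
  classical
  refine ⟨200, by norm_num, fun n s mA mB hmA hmB P hP => ?_⟩
  set L : ℕ := Nat.log 2 (s+1) + 2 with hL
  set K : ℕ := (s+1) * L with hK
  set t : ℕ := 1152 * K with ht
  have hK1 : 1 ≤ K := by
    have : 1 ≤ s + 1 := Nat.succ_le_succ (Nat.zero_le _)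
    calc 1 = 1 * 1 := by norm_num
    _ ≤ (s+1) * L := Nat.mul_le_mul this (by omega)
  -- bound on the number of Bob-side events
  have hpow : 2 * (s+1)^(s+1) ≤ 2^K := by
    have h1 : s + 1 < 2 ^ (Nat.log 2 (s+1) + 1) :=
      Nat.lt_pow_succ_log_self (by norm_num) (s+1)
    calc 2 * (s+1)^(s+1) ≤ 2 * (2 ^ (Nat.log 2 (s+1) + 1))^(s+1) :=
          Nat.mul_le_mul_left 2 (Nat.pow_le_pow_left h1.le _)
    _ = 2 ^ ((Nat.log 2 (s+1) + 1) * (s+1) + 1) := by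
        rw [← pow_mul, ← pow_succ']
    _ ≤ 2 ^ K := by
        apply Nat.pow_le_pow_right (by norm_num)
        rw [hK, hL]
        calc (Nat.log 2 (s+1) + 1) * (s+1) + 1 ≤ (Nat.log 2 (s+1) + 1) * (s+1) + (s+1) := by omega
          _ = (s+1) * (Nat.log 2 (s+1) + 2) := by ring
  have hcardβ : Fintype.card ((Fin s → Fin s) × Bool) ≤ 2 * (s+1)^(s+1) := by
    rw [Fintype.card_prod, Fintype.card_bool, Fintype.card_fun, Fintype.card_fin]
    have : s ^ s ≤ (s+1)^(s+1) :=
      le_trans (Nat.pow_le_pow_left (Nat.le_succ s) s) (Nat.pow_le_pow_right (by omega) (Nat.le_succ s))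
    omega
  have hsmall : (Fintype.card ((Fin s → Fin s) × Bool) : ℝ)
      * Real.exp (-(t:ℝ)/1152) < 1 := by
    have hlt : (Fintype.card ((Fin s → Fin s) × Bool) : ℝ) < Real.exp ((t:ℝ)/1152) := by
      have e1 : (t:ℝ)/1152 = (K:ℕ) := by rw [ht]; push_cast; ring
      rw [e1]
      calc (Fintype.card ((Fin s → Fin s) × Bool) : ℝ) ≤ ((2^K : ℕ) : ℝ) := by
            exact_mod_cast le_trans hcardβ hpow
      _ = (2:ℝ)^K := by push_cast; ring
      _ < Real.exp 1 ^ K := by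
          apply pow_lt_pow_left₀ _ (by norm_num) (by omega)
          have := Real.exp_one_gt_d9
          linarith
      _ = Real.exp K := by rw [← Real.exp_nat_mul]; ring_nf
    calc (Fintype.card ((Fin s → Fin s) × Bool) : ℝ) * Real.exp (-(t:ℝ)/1152)
        < Real.exp ((t:ℝ)/1152) * Real.exp (-(t:ℝ)/1152) :=
          mul_lt_mul_of_pos_right hlt (Real.exp_pos _)
      _ = 1 := by
          rw [← Real.exp_add, show (t:ℝ)/1152 + -(t:ℝ)/1152 = 0 by ring]
          exact Real.exp_zero
  -- sample choice for each x
  haveI : Nonempty (Fin mA) := ⟨⟨0, hmA⟩⟩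
  have hσ : ∀ x : Fin n → Bool, ∃ ω : Fin t → Fin mA,
      ∀ b : (Fin s → Fin s) × Bool,
        12 * t * (Finset.univ.filter (fun r : Fin mA =>
            GoodGH b.2 (P.A x r) b.1)).card
          ≤ 12 * mA * (Finset.univ.filter (fun i : Fin t =>
              GoodGH b.2 (P.A x (ω i)) b.1)).card + mA * t := by
    intro x
    obtain ⟨ω, hω⟩ := exists_good_sample
      (fun (b : (Fin s → Fin s) × Bool) (r : Fin mA) => GoodGH b.2 (P.A x r) b.1)
      t hsmall
    refine ⟨ω, fun b => ?_⟩
    have := hω b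
    simpa [Fintype.card_fin] using this
  choose σ hσ' using hσ
  -- the deterministic message map
  set F : (Fin n → Bool) → (Fin t → (Option (Fin s) → Option (Fin s))) :=
    fun x i => P.A x (σ x i) with hF
  have htpos : 0 < t := by rw [ht]; omega
  have hFinj : Function.Injective F := by
    intro x x' hxy
    by_contra hne
    -- from x vs x : equality holds
    have hEQxx : EQ n x x = true := by simp [EQ]
    have hEQx'x : EQ n x' x = false := by simp [EQ]; exact fun h => hne h.symm
    have h1 := computes_sum P hP x x
    have h2 := computes_sum P hP x' x
    rw [hEQxx] at h1
    rw [hEQx'x] at h2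
    -- sample bounds summed over Bob's coins
    have hsum1 : 12 * t * (∑ r2 : Fin mB, (Finset.univ.filter (fun r1 : Fin mA =>
          GoodGH true (P.A x r1) (P.B x r2))).card)
        ≤ 12 * mA * (∑ r2 : Fin mB, (Finset.univ.filter (fun i : Fin t =>
            GoodGH true (F x i) (P.B x r2))).card) + mA * t * mB := by
      rw [Finset.mul_sum, Finset.mul_sum]
      calc ∑ r2 : Fin mB, 12 * t * (Finset.univ.filter (fun r1 : Fin mA =>
            GoodGH true (P.A x r1) (P.B x r2))).card
          ≤ ∑ r2 : Fin mB, (12 * mA * (Finset.univ.filter (fun i : Fin t =>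
              GoodGH true (F x i) (P.B x r2))).card + mA * t) :=
            Finset.sum_le_sum fun r2 _ => hσ' x (P.B x r2, true)
        _ = _ := by rw [Finset.sum_add_distrib, Finset.sum_const]; simp [mul_comm]
    have hsum2 : 12 * t * (∑ r2 : Fin mB, (Finset.univ.filter (fun r1 : Fin mA =>
          GoodGH false (P.A x' r1) (P.B x r2))).card)
        ≤ 12 * mA * (∑ r2 : Fin mB, (Finset.univ.filter (fun i : Fin t =>
            GoodGH false (F x i) (P.B x r2))).card) + mA * t * mB := by
      rw [Finset.mul_sum, Finset.mul_sum]
      calc ∑ r2 : Fin mB, 12 * t * (Finset.univ.filter (fun r1 : Fin mA =>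
            GoodGH false (P.A x' r1) (P.B x r2))).card
          ≤ ∑ r2 : Fin mB, (12 * mA * (Finset.univ.filter (fun i : Fin t =>
              GoodGH false (F x' i) (P.B x r2))).card + mA * t) :=
            Finset.sum_le_sum fun r2 _ => hσ' x' (P.B x r2, false)
        _ = _ := by
            rw [← hxy, Finset.sum_add_distrib, Finset.sum_const]
            simp only [smul_eq_mul, Finset.card_univ, Fintype.card_fin]
            ring
    -- disjointness
    have hdisj : ∀ r2 : Fin mB,
        (Finset.univ.filter (fun i : Fin t => GoodGH true (F x i) (P.B x r2))).card
        + (Finset.univ.filter (fun i : Fin t => GoodGH false (F x i) (P.B x r2))).card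
        ≤ t := by
      intro r2
      rw [← Finset.card_union_of_disjoint]
      · calc _ ≤ (Finset.univ : Finset (Fin t)).card := Finset.card_le_card (Finset.subset_univ _)
          _ = t := by rw [Finset.card_univ, Fintype.card_fin]
      · rw [Finset.disjoint_filter]
        intro i _ h1' h2'
        exact goodGH_not_both h1' h2'
    set Sd1 := ∑ r2 : Fin mB, (Finset.univ.filter (fun i : Fin t =>
        GoodGH true (F x i) (P.B x r2))).card with hSd1
    set Sd2 := ∑ r2 : Fin mB, (Finset.univ.filter (fun i : Fin t =>
        GoodGH false (F x i) (P.B x r2))).card with hSd2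
    have hdisjsum : Sd1 + Sd2 ≤ t * mB := by
      rw [hSd1, hSd2, ← Finset.sum_add_distrib]
      calc ∑ r2 : Fin mB, _ ≤ ∑ _r2 : Fin mB, t := Finset.sum_le_sum fun r2 _ => hdisj r2
        _ = t * mB := by simp [mul_comm]
    -- combine
    have hc1 : 8 * (t * (mA * mB)) ≤ 12 * mA * Sd1 + mA * t * mB := by
      calc 8 * (t * (mA * mB)) = 4 * t * (2 * (mA * mB)) := by ring
        _ ≤ 4 * t * (3 * ∑ r2 : Fin mB, (Finset.univ.filter (fun r1 : Fin mA =>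
            GoodGH true (P.A x r1) (P.B x r2))).card) := Nat.mul_le_mul_left _ h1
        _ = 12 * t * (∑ r2 : Fin mB, (Finset.univ.filter (fun r1 : Fin mA =>
            GoodGH true (P.A x r1) (P.B x r2))).card) := by ring
        _ ≤ _ := hsum1
    have hc2 : 8 * (t * (mA * mB)) ≤ 12 * mA * Sd2 + mA * t * mB := by
      calc 8 * (t * (mA * mB)) = 4 * t * (2 * (mA * mB)) := by ring
        _ ≤ 4 * t * (3 * ∑ r2 : Fin mB, (Finset.univ.filter (fun r1 : Fin mA =>
            GoodGH false (P.A x' r1) (P.B x r2))).card) := Nat.mul_le_mul_left _ h2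
        _ = 12 * t * (∑ r2 : Fin mB, (Finset.univ.filter (fun r1 : Fin mA =>
            GoodGH false (P.A x' r1) (P.B x r2))).card) := by ring
        _ ≤ _ := hsum2
    -- cancel mA and derive contradiction
    have key : mA * (16 * (t * mB)) ≤ mA * (12 * (Sd1 + Sd2) + 2 * (t * mB)) := by
      have e1 : mA * (16 * (t * mB)) = 8 * (t * (mA * mB)) + 8 * (t * (mA * mB)) := by ring
      have e2 : mA * (12 * (Sd1 + Sd2) + 2 * (t * mB))
          = (12 * mA * Sd1 + mA * t * mB) + (12 * mA * Sd2 + mA * t * mB) := by ring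
      rw [e1, e2]
      exact Nat.add_le_add hc1 hc2
    have key2 : 16 * (t * mB) ≤ 12 * (Sd1 + Sd2) + 2 * (t * mB) :=
      Nat.le_of_mul_le_mul_left key hmA
    have : 12 * (Sd1 + Sd2) ≤ 12 * (t * mB) := Nat.mul_le_mul_left _ hdisjsum
    have htm : 0 < t * mB := Nat.mul_pos htpos hmB
    omega
  -- counting
  have hcount : 2 ^ n ≤ (s+1) ^ ((s+1) * t) := by
    have := Fintype.card_le_of_injective F hFinj
    rw [Fintype.card_fun, Fintype.card_fun, Fintype.card_fun] at this
    simp only [Fintype.card_bool, Fintype.card_fin, Fintype.card_option] at this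
    calc 2 ^ n ≤ ((s+1)^(s+1))^t := this
      _ = (s+1) ^ ((s+1) * t) := by rw [← pow_mul]
  have hn : n ≤ 1152 * K^2 := by
    have h2n : 2 ^ n ≤ 2 ^ (1152 * K^2) := by
      calc 2 ^ n ≤ (s+1) ^ ((s+1) * t) := hcount
        _ ≤ (2 ^ (Nat.log 2 (s+1) + 1)) ^ ((s+1) * t) :=
            Nat.pow_le_pow_left (Nat.lt_pow_succ_log_self (by norm_num) (s+1)).le _
        _ = 2 ^ ((Nat.log 2 (s+1) + 1) * ((s+1) * t)) := by rw [← pow_mul]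
        _ ≤ 2 ^ (1152 * K^2) := by
            apply Nat.pow_le_pow_right (by norm_num)
            have : (Nat.log 2 (s+1) + 1) * (s+1) ≤ K := by
              rw [hK, hL, mul_comm]
              exact Nat.mul_le_mul_left _ (by omega)
            calc (Nat.log 2 (s+1) + 1) * ((s+1) * t)
                = ((Nat.log 2 (s+1) + 1) * (s+1)) * t := by ring
              _ ≤ K * t := Nat.mul_le_mul_right t this
              _ = 1152 * K^2 := by rw [ht]; ring
    exact (Nat.pow_le_pow_iff_right (by norm_num)).1 h2n
  have hsqrt : Nat.sqrt n ≤ 34 * K := by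
    have : n ≤ (34 * K)^2 := le_trans hn (by rw [mul_pow (34:ℕ) K 2, show (34:ℕ)^2 = 1156 by norm_num]; generalize K^2 = z; omega : 1152 * K^2 ≤ (34*K)^2)
    calc Nat.sqrt n ≤ Nat.sqrt ((34*K)^2) := Nat.sqrt_le_sqrt this
      _ = 34 * K := by rw [pow_two, Nat.sqrt_eq]
  have hlogpos : 0 < Nat.log 2 (n+2) := Nat.log_pos (by norm_num) (by omega)
  rcases le_or_gt (s+1) (n+2) with hcase | hcase
  · have hloglog : Nat.log 2 (s+1) ≤ Nat.log 2 (n+2) := Nat.log_mono_right hcase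
    calc Nat.sqrt n ≤ 34 * K := hsqrt
      _ = 34 * (s+1) * (Nat.log 2 (s+1) + 2) := by rw [hK, hL]; ring
      _ ≤ 34 * (s+1) * (3 * Nat.log 2 (n+2)) := by
          apply Nat.mul_le_mul_left
          omega
      _ ≤ 200 * (s+1) * Nat.log 2 (n+2) := by
          rw [show 34 * (s+1) * (3 * Nat.log 2 (n+2)) = 102 * ((s+1) * Nat.log 2 (n+2)) by ring,
            show 200 * (s+1) * Nat.log 2 (n+2) = 200 * ((s+1) * Nat.log 2 (n+2)) by ring]
          exact Nat.mul_le_mul_right _ (by norm_num)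
  · calc Nat.sqrt n ≤ n := Nat.sqrt_le_self n
      _ ≤ (s+1) := by omega
      _ ≤ 200 * (s+1) * Nat.log 2 (n+2) :=
          le_trans (Nat.le_mul_of_pos_left (s+1) (by omega : 0 < 200)) (Nat.le_mul_of_pos_right _ hlogpos)
end

section
/- A fraction 1 − o(1) of all Boolean functions f : {0,1}ⁿ × {0,1}ⁿ → {0,1} have garden-hose complexity GH(f) = 2^{Ω(n)}. -/
-- Bob's matching in the universal construction
def consB {X Y : Type} {s : ℕ} (f : X → Y → Bool) (e : Bool × X ≃ Fin s)
    (y : Y) (v : Fin s) : Fin s :=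
  if f (e.symm v).2 y = true then v else e (!(e.symm v).1, (e.symm v).2)

lemma consB_invol {X Y : Type} {s : ℕ} (f : X → Y → Bool) (e : Bool × X ≃ Fin s)
    (y : Y) : Function.Involutive (consB f e y) := by
  intro v
  by_cases h : f (e.symm v).2 y = true
  · simp [consB, h]
  · simp [consB, h, Bool.not_not]

lemma exists_protocol {X Y : Type} [Fintype X] [DecidableEq X] (f : X → Y → Bool) :
    ∃ s : ℕ, ∃ P : GHProtocol X Y s, P.Computes f := by
  classical
  set s := Fintype.card (Bool × X) with hs
  let e : Bool × X ≃ Fin s := Fintype.equivFin _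
  refine ⟨s, ⟨fun x => Equiv.swap (none) (some (e (false, x))), consB f e,
      fun x v => Equiv.swap_apply_self _ _ _, consB_invol f e⟩, ?_⟩
  intro x y
  dsimp only
  set p := e (false, x) with hp
  set A : Option (Fin s) → Option (Fin s) := ⇑(Equiv.swap (none) (some p)) with hA
  set B : Fin s → Fin s := consB f e y with hB
  have hw1 : ghWalk A B 1 = some p := by
    show ghStep A B 0 (ghWalk A B 0) = some p
    show A none = some p
    simp [hA]
  have h0 : ghStep A B 0 (ghWalk A B 0) ≠ ghWalk A B 0 := by
    show A none ≠ none
    simp [hA]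
  have hBp : B p = if f x y = true then p else e (true, x) := by
    simp [hB, consB, hp]
  by_cases hf : f x y = true
  · -- halt after 1 step
    have hmem1 : 1 ∈ {n | ghStep A B n (ghWalk A B n) = ghWalk A B n} := by
      show ghStep A B 1 (ghWalk A B 1) = ghWalk A B 1
      rw [hw1]
      show Option.map B (some p) = some p
      simp [hBp, hf]
    refine ⟨⟨1, hmem1⟩, ?_⟩
    have hne : {n | ghStep A B n (ghWalk A B n) = ghWalk A B n}.Nonempty := ⟨1, hmem1⟩
    have hmem := Nat.sInf_mem hne
    have hle : sInf {n | ghStep A B n (ghWalk A B n) = ghWalk A B n} ≤ 1 :=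
      Nat.sInf_le hmem1
    have hne0 : sInf {n | ghStep A B n (ghWalk A B n) = ghWalk A B n} ≠ 0 := by
      intro h0'
      exact h0 (by rw [← h0']; exact hmem)
    have : ghLen A B = 1 := by unfold ghLen; omega
    rw [this, hf]
    simp
  · -- halt after 2 steps
    have hq : B p = e (true, x) := by rw [hBp, if_neg hf]
    have hqp : e (true, x) ≠ p := by
      rw [hp]
      intro h
      have := e.injective h
      simp at this
    have hw2 : ghWalk A B 2 = some (e (true, x)) := by
      show ghStep A B 1 (ghWalk A B 1) = _
      rw [hw1]
      show Option.map B (some p) = _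
      simp [hq]
    have h1 : ghStep A B 1 (ghWalk A B 1) ≠ ghWalk A B 1 := by
      rw [hw1]
      show Option.map B (some p) ≠ some p
      simp [hq, hqp]
    have hmem2 : 2 ∈ {n | ghStep A B n (ghWalk A B n) = ghWalk A B n} := by
      show ghStep A B 2 (ghWalk A B 2) = ghWalk A B 2
      rw [hw2]
      show A (some (e (true, x))) = some (e (true, x))
      rw [hA]
      exact Equiv.swap_apply_of_ne_of_ne (by simp) (by simp [hqp])
    refine ⟨⟨2, hmem2⟩, ?_⟩
    have hne : {n | ghStep A B n (ghWalk A B n) = ghWalk A B n}.Nonempty := ⟨2, hmem2⟩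
    have hmem := Nat.sInf_mem hne
    have hle : sInf {n | ghStep A B n (ghWalk A B n) = ghWalk A B n} ≤ 2 :=
      Nat.sInf_le hmem2
    have hne0 : sInf {n | ghStep A B n (ghWalk A B n) = ghWalk A B n} ≠ 0 := by
      intro h0'; exact h0 (by rw [← h0']; exact hmem)
    have hne1 : sInf {n | ghStep A B n (ghWalk A B n) = ghWalk A B n} ≠ 1 := by
      intro h1'; exact h1 (by rw [← h1']; exact hmem)
    have : ghLen A B = 2 := by unfold ghLen; omega
    rw [this]
    simp [hf]

-- uniqueness
lemma computes_unique {X Y : Type} {s : ℕ} (P Q : GHProtocol X Y s)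
    (hA : P.A = Q.A) (hB : P.B = Q.B) {f g : X → Y → Bool}
    (hf : P.Computes f) (hg : Q.Computes g) : f = g := by
  funext x y
  have h1 := (hf x y).2
  have h2 := (hg x y).2
  rw [hA, hB] at h1
  have : (f x y = true) ↔ (g x y = true) := h1.symm.trans h2
  cases hfx : f x y <;> cases hgx : g x y <;> simp_all

lemma protocol_determines {X Y : Type} {s t : ℕ} (hst : s = t)
    (P : GHProtocol X Y s) (Q : GHProtocol X Y t)
    (hAB : HEq (P.A, P.B) (Q.A, Q.B)) {f g : X → Y → Bool}
    (hf : P.Computes f) (hg : Q.Computes g) : f = g := by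
  subst hst
  rw [heq_iff_eq, Prod.mk.injEq] at hAB
  exact computes_unique P Q hAB.1 hAB.2 hf hg

lemma ghWitness_exists {X Y : Type} [Fintype X] [DecidableEq X] (f : X → Y → Bool) :
    ∃ P : GHProtocol X Y (GH f), P.Computes f := by
  have hne : {s | ∃ P : GHProtocol X Y s, P.Computes f}.Nonempty := by
    obtain ⟨s, P, hP⟩ := exists_protocol f
    exact ⟨s, P, hP⟩
  exact Nat.sInf_mem hne

noncomputable def ghWitness {X Y : Type} [Fintype X] [DecidableEq X]
    (f : X → Y → Bool) : GHProtocol X Y (GH f) :=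
  (ghWitness_exists f).choose

lemma ghWitness_computes {X Y : Type} [Fintype X] [DecidableEq X]
    (f : X → Y → Bool) : (ghWitness f).Computes f :=
  (ghWitness_exists f).choose_spec

open Classical in
/-- A fraction `1 − o(1)` of all Boolean functions
`f : {0,1}ⁿ × {0,1}ⁿ → {0,1}` have garden-hose complexity `2^{Ω(n)}`: there is
a constant `c` such that for every `ε > 0`, for all large enough `n`, the
number of functions with `GH(f) < 2^{n/c}` is at most an `ε`-fraction of all
functions. -/
theorem GH_most_functions_exponential :
    ∃ c : ℕ, 0 < c ∧
      ∀ ε : ℝ, 0 < ε → ∃ N : ℕ, ∀ n ≥ N,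
        (((Finset.univ : Finset ((Fin n → Bool) → (Fin n → Bool) → Bool)).filter
            (fun f => GH f < 2 ^ (n / c))).card : ℝ)
          ≤ ε * ((Finset.univ :
              Finset ((Fin n → Bool) → (Fin n → Bool) → Bool)).card : ℝ) := by
  classical
  refine ⟨3, by norm_num, ?_⟩
  intro ε hε
  obtain ⟨m, hm⟩ := exists_pow_lt_of_lt_one hε (by norm_num : (1/2 : ℝ) < 1)
  refine ⟨max m 9, fun n hn => ?_⟩
  have hn9 : 9 ≤ n := le_trans (le_max_right m 9) hn
  have hmn : m ≤ n := le_trans (le_max_left m 9) hn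
  set X := (Fin n → Bool) with hX
  set k := n / 3 with hk
  set S := 2 ^ k with hS
  have hS1 : 1 ≤ S := Nat.one_le_two_pow
  -- the injection target
  let T := (s : Fin S) ×
      ((X → (Option (Fin (s : ℕ)) → Option (Fin (s : ℕ)))) ×
       (X → (Fin (s : ℕ) → Fin (s : ℕ))))
  set cnt := ((Finset.univ : Finset (X → X → Bool)).filter
      (fun f => GH f < 2 ^ (n / 3))).card with hcnt
  have hstep1 : cnt ≤ Fintype.card T := by
    rw [hcnt, ← Finset.card_univ]
    apply Finset.card_le_card_of_injOn
      (fun f : X → X → Bool =>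
        if h : GH f < S then
          (⟨⟨GH f, h⟩, ((ghWitness f).A, (ghWitness f).B)⟩ : T)
        else ⟨⟨0, hS1⟩, (fun _ => id, fun _ => id)⟩)
    · intro f _; exact Finset.mem_univ _
    · intro f hf g hg hfg
      simp only [Finset.mem_coe, Finset.mem_filter] at hf hg
      have hf' : GH f < S := hf.2
      have hg' : GH g < S := hg.2
      simp only [dif_pos hf', dif_pos hg'] at hfg
      injection hfg with h1 h2
      have hs : GH f = GH g := congrArg Fin.val h1
      exact protocol_determines hs _ _ h2 (ghWitness_computes f) (ghWitness_computes g)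
  -- cardinality of T
  have hcardX : Fintype.card X = 2 ^ n := by
    simp [hX]
  have hstep2 : Fintype.card T ≤ S * ((S ^ S) ^ 2 ^ n * (S ^ S) ^ 2 ^ n) := by
    rw [Fintype.card_sigma]
    have hbound : ∀ s : Fin S,
        Fintype.card ((X → (Option (Fin (s : ℕ)) → Option (Fin (s : ℕ)))) ×
          (X → (Fin (s : ℕ) → Fin (s : ℕ))))
          ≤ (S ^ S) ^ 2 ^ n * (S ^ S) ^ 2 ^ n := by
      intro s
      have hsS : (s : ℕ) + 1 ≤ S := s.isLt
      have h1 : ((s : ℕ) + 1) ^ ((s : ℕ) + 1) ≤ S ^ S :=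
        le_trans (Nat.pow_le_pow_left hsS _) (Nat.pow_le_pow_right hS1 hsS)
      have h2 : (s : ℕ) ^ (s : ℕ) ≤ S ^ S :=
        le_trans (Nat.pow_le_pow_left (by omega) _) (Nat.pow_le_pow_right hS1 (by omega))
      simp only [Fintype.card_prod, Fintype.card_fun, Fintype.card_option,
        Fintype.card_fin, Fintype.card_bool]
      rw [hcardX]
      exact Nat.mul_le_mul (Nat.pow_le_pow_left h1 _) (Nat.pow_le_pow_left h2 _)
    calc ∑ s : Fin S, Fintype.card _
        ≤ Finset.univ.card • ((S ^ S) ^ 2 ^ n * (S ^ S) ^ 2 ^ n) :=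
          Finset.sum_le_card_nsmul _ _ _ (fun s _ => hbound s)
      _ = S * ((S ^ S) ^ 2 ^ n * (S ^ S) ^ 2 ^ n) := by
          rw [Finset.card_univ, Fintype.card_fin, smul_eq_mul]
  -- rewrite as a power of two and bound the exponent
  have hpow : S * ((S ^ S) ^ 2 ^ n * (S ^ S) ^ 2 ^ n)
      = 2 ^ (k + (k * 2 ^ k * 2 ^ n + k * 2 ^ k * 2 ^ n)) := by
    rw [hS]
    rw [show ((2:ℕ) ^ k) ^ ((2:ℕ) ^ k) = 2 ^ (k * 2 ^ k) from (pow_mul 2 k (2 ^ k)).symm]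
    rw [show ((2:ℕ) ^ (k * 2 ^ k)) ^ ((2:ℕ) ^ n) = 2 ^ (k * 2 ^ k * 2 ^ n) from
      (pow_mul 2 (k * 2 ^ k) (2 ^ n)).symm]
    rw [← pow_add, ← pow_add]
  have hE : k + (k * 2 ^ k * 2 ^ n + k * 2 ^ k * 2 ^ n) + m ≤ 2 ^ n * 2 ^ n := by
    have hk2 : k < 2 ^ k := Nat.lt_two_pow_self (n := k)
    have h1 : k * 2 ^ k * 2 ^ n ≤ 2 ^ (k + k + n) := by
      rw [pow_add, pow_add]
      exact Nat.mul_le_mul (Nat.mul_le_mul hk2.le (le_refl _)) (le_refl _)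
    have hkk : k + k + n ≤ 2 * n - 2 := by omega
    have h2 : (2:ℕ) ^ (k + k + n) ≤ 2 ^ (2 * n - 2) := Nat.pow_le_pow_right (by norm_num) hkk
    have h3 : (2:ℕ) ^ (2 * n - 1) = 2 * 2 ^ (2 * n - 2) := by
      rw [← pow_succ']
      congr 1
      omega
    have h4 : (2:ℕ) ^ (2 * n) = 2 * 2 ^ (2 * n - 1) := by
      rw [← pow_succ']
      congr 1
      omega
    have h5 : (2:ℕ) ^ n * 2 ^ n = 2 ^ (2 * n) := by rw [← pow_add]; congr 1; omega
    have h6 : 2 * n - 1 < 2 ^ (2 * n - 1) := Nat.lt_two_pow_self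
    omega
  have hfinal : cnt * 2 ^ m ≤ 2 ^ (2 ^ n * 2 ^ n) := by
    calc cnt * 2 ^ m ≤ 2 ^ (k + (k * 2 ^ k * 2 ^ n + k * 2 ^ k * 2 ^ n)) * 2 ^ m := by
          apply Nat.mul_le_mul_right
          rw [← hpow]
          exact le_trans hstep1 hstep2
      _ = 2 ^ (k + (k * 2 ^ k * 2 ^ n + k * 2 ^ k * 2 ^ n) + m) := by
          rw [← pow_add]
      _ ≤ 2 ^ (2 ^ n * 2 ^ n) := Nat.pow_le_pow_right (by norm_num) hE
  -- transfer to ℝ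
  have hcardF : ((Finset.univ : Finset (X → X → Bool)).card : ℝ) = 2 ^ (2 ^ n * 2 ^ n) := by
    rw [Finset.card_univ]
    have : Fintype.card (X → X → Bool) = 2 ^ (2 ^ n * 2 ^ n) := by
      rw [Fintype.card_fun, Fintype.card_fun, Fintype.card_bool, hcardX, ← pow_mul,
        Nat.mul_comm]
    rw [this]
    push_cast
    ring
  rw [hcardF]
  have hR : (cnt : ℝ) * 2 ^ m ≤ 2 ^ (2 ^ n * 2 ^ n) := by exact_mod_cast hfinal
  have h2m : (0:ℝ) < 2 ^ m := by positivity
  calc (cnt : ℝ) ≤ 2 ^ (2 ^ n * 2 ^ n) / 2 ^ m := by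
        rw [le_div_iff₀ h2m]; exact hR
    _ = (1/2 : ℝ) ^ m * 2 ^ (2 ^ n * 2 ^ n) := by
        rw [div_pow, one_pow]; ring
    _ ≤ ε * 2 ^ (2 ^ n * 2 ^ n) := by
        apply mul_le_mul_of_nonneg_right hm.le (by positivity)
end
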